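/- Any PARITY-decision tree computing the MAJORITY function on N bits has cost at least N + 1 - w(N), where w(N) is the Hamming weight of N. -/

import Mathlib

/-- A decision tree whose queries are parities of arbitrary subsets of the
N input bits (over GF(2)). -/
inductive ParityTree (N : ℕ) where
  | leaf (b : Bool)
  | node (Q : Finset (Fin N)) (t0 t1 : ParityTree N)

/-- Evaluation of a parity decision tree on an input. -/
def ParityTree.eval {N : ℕ} : ParityTree N → (Fin N → ZMod 2) → Bool
  | .leaf b, _ => b
  | .node Q t0 t1, x => if (∑ i ∈ Q, x i) = 0 then t0.eval x else t1.eval x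

/-- Cost (worst-case number of queries = depth) of a parity decision tree. -/
def ParityTree.cost {N : ℕ} : ParityTree N → ℕ
  | .leaf _ => 0
  | .node _ t0 t1 => 1 + max t0.cost t1.cost


open Finset

lemma affine_card (N k : ℕ) (φ : (Fin N → ZMod 2) →ₗ[ZMod 2] (Fin k → ZMod 2))
    (c : Fin k → ZMod 2) :
    2 ^ (N - k) ∣ (univ.filter fun x => φ x = c).card := by
  classical
  by_cases h : (univ.filter fun x => φ x = c).Nonempty
  · obtain ⟨x0, hx0⟩ := h
    rw [mem_filter] at hx0
    have hcard : (univ.filter fun x => φ x = c).card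
        = (univ.filter fun y : Fin N → ZMod 2 => φ y = 0).card := by
      apply Finset.card_bij' (fun x _ => x - x0) (fun y _ => y + x0)
      · intro x hx
        rw [mem_filter] at hx ⊢
        simp [map_sub, hx.2, hx0.2]
      · intro y hy
        rw [mem_filter] at hy ⊢
        simp [map_add, hy.2, hx0.2]
      · intro x _; abel
      · intro y _; abel
    rw [hcard]
    have hker : (univ.filter fun y : Fin N → ZMod 2 => φ y = 0).card
        = Fintype.card (LinearMap.ker φ) := by
      rw [Fintype.card_subtype]
      congr 1
      ext y
      simp [LinearMap.mem_ker]
    rw [hker]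
    have h2 : Fintype.card (LinearMap.ker φ) = 2 ^ Module.finrank (ZMod 2) (LinearMap.ker φ) := by
      have := Module.card_eq_pow_finrank (K := ZMod 2) (V := LinearMap.ker φ)
      simpa using this
    rw [h2]
    apply pow_dvd_pow
    have hrn := LinearMap.finrank_range_add_finrank_ker φ
    have hd : Module.finrank (ZMod 2) (Fin N → ZMod 2) = N := by
      simp [Module.finrank_pi]
    have hr : Module.finrank (ZMod 2) (LinearMap.range φ) ≤ k := by
      have := Submodule.finrank_le (LinearMap.range φ)
      simpa [Module.finrank_pi] using this
    omega
  · rw [Finset.not_nonempty_iff_eq_empty] at h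
    simp [h]

def sumMap (N : ℕ) (E : List (Finset (Fin N) × ZMod 2)) :
    (Fin N → ZMod 2) →ₗ[ZMod 2] (Fin E.length → ZMod 2) where
  toFun x := fun j => ∑ i ∈ (E.get j).1, x i
  map_add' x y := by funext j; simp [Finset.sum_add_distrib]
  map_smul' c x := by funext j; simp [Finset.mul_sum]


lemma sub_mono (N : ℕ) : ∀ c m L : ℕ, c ≤ m → N - (1 + m) - L ≤ N - c - (L + 1) := by
  intro c m L h; omega


lemma key (N : ℕ) (T : ParityTree N) (E : List (Finset (Fin N) × ZMod 2)) :
    2 ^ (N - T.cost - E.length) ∣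
      (univ.filter fun x : Fin N → ZMod 2 =>
        T.eval x = true ∧ ∀ e ∈ E, (∑ i ∈ e.1, x i) = e.2).card := by
  classical
  induction T generalizing E with
  | leaf b =>
    cases b with
    | false => simp [ParityTree.eval]
    | true =>
      have h := affine_card N E.length (sumMap N E) (fun j => (E.get j).2)
      have heq : (univ.filter fun x : Fin N → ZMod 2 =>
            ParityTree.eval (.leaf true) x = true ∧ ∀ e ∈ E, (∑ i ∈ e.1, x i) = e.2)
          = (univ.filter fun x => sumMap N E x = fun j => (E.get j).2) := by
        apply Finset.filter_congr
        intro x _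
        simp only [ParityTree.eval, true_and]
        constructor
        · intro hx
          funext j
          exact hx _ (List.mem_iff_get.mpr ⟨j, rfl⟩)
        · intro hx e he
          obtain ⟨j, rfl⟩ := List.mem_iff_get.mp he
          exact congrFun hx j
      rw [heq]
      simpa [ParityTree.cost] using h
  | node Q t0 t1 ih0 ih1 =>
    have hz : ∀ a : ZMod 2, ¬a = 0 ↔ a = 1 := by decide
    have hsplit :
        (univ.filter fun x : Fin N → ZMod 2 =>
          ParityTree.eval (.node Q t0 t1) x = true ∧ ∀ e ∈ E, (∑ i ∈ e.1, x i) = e.2).card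
        = (univ.filter fun x : Fin N → ZMod 2 =>
            t0.eval x = true ∧ ∀ e ∈ (Q, (0:ZMod 2)) :: E, (∑ i ∈ e.1, x i) = e.2).card
        + (univ.filter fun x : Fin N → ZMod 2 =>
            t1.eval x = true ∧ ∀ e ∈ (Q, (1:ZMod 2)) :: E, (∑ i ∈ e.1, x i) = e.2).card := by
      rw [← Finset.card_filter_add_card_filter_not
          (p := fun x : Fin N → ZMod 2 => (∑ i ∈ Q, x i) = 0)]
      congr 1
      · rw [Finset.filter_filter]
        congr 1
        apply Finset.filter_congr
        intro x _
        simp only [ParityTree.eval, List.forall_mem_cons]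
        by_cases hq : (∑ i ∈ Q, x i) = 0 <;> simp [hq] <;> tauto
      · rw [Finset.filter_filter]
        congr 1
        apply Finset.filter_congr
        intro x _
        simp only [ParityTree.eval, List.forall_mem_cons]
        by_cases hq : (∑ i ∈ Q, x i) = 0
        · simp [hq]
        · have hq1 := (hz _).mp hq
          simp [hq, hq1]
    rw [hsplit]
    have e0 := ih0 ((Q, (0:ZMod 2)) :: E)
    have e1 := ih1 ((Q, (1:ZMod 2)) :: E)
    simp only [List.length_cons] at e0 e1
    have hc : ParityTree.cost (.node Q t0 t1) = 1 + max t0.cost t1.cost := rfl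
    rw [hc]
    apply dvd_add
    · exact (pow_dvd_pow 2 (sub_mono N _ _ _ (le_max_left t0.cost t1.cost))).trans e0
    · exact (pow_dvd_pow 2 (sub_mono N _ _ _ (le_max_right t0.cost t1.cost))).trans e1

lemma zmod2_em : ∀ a : ZMod 2, a = 0 ∨ a = 1 := by decide

lemma zmod2_ne : ∀ a : ZMod 2, ¬a = 0 ↔ a = 1 := by decide

/-- transfer counting from ZMod-2 vectors to finsets -/
lemma card_filter_transfer (N : ℕ) (p : Finset (Fin N) → Prop) [DecidablePred p] :
    (univ.filter fun x : Fin N → ZMod 2 => p (univ.filter fun i => x i = 1)).card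
    = (univ.filter p).card := by
  classical
  apply Finset.card_bij' (fun x _ => univ.filter fun i => x i = 1)
    (fun s _ => fun i => if i ∈ s then (1 : ZMod 2) else 0)
  · intro x _
    funext i
    rcases zmod2_em (x i) with h | h <;> simp [h]
  · intro s _
    ext i
    by_cases h : i ∈ s <;> simp [h]
  · intro x hx
    rw [mem_filter] at hx ⊢
    exact ⟨mem_univ _, hx.2⟩
  · intro s hs
    rw [mem_filter] at hs ⊢
    refine ⟨mem_univ _, ?_⟩
    have : (univ.filter fun i => (if i ∈ s then (1:ZMod 2) else 0) = 1) = s := by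
      ext i
      by_cases h : i ∈ s <;> simp [h]
    rw [this]
    exact hs.2

lemma count_ge (N m : ℕ) :
    (univ.filter fun A : Finset (Fin N) => m ≤ A.card).card
    = ∑ k ∈ Icc m N, N.choose k := by
  classical
  have : (univ.filter fun A : Finset (Fin N) => m ≤ A.card)
      = (Icc m N).biUnion (fun k => powersetCard k univ) := by
    ext A
    simp only [mem_filter, mem_univ, true_and, mem_biUnion, mem_Icc, mem_powersetCard]
    constructor
    · intro h
      exact ⟨A.card, ⟨h, by simpa using card_le_univ A⟩, subset_univ A, rfl⟩
    · rintro ⟨k, ⟨hk, _⟩, _, rfl⟩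
      exact hk
  rw [this, card_biUnion]
  · apply Finset.sum_congr rfl
    intro k _
    rw [card_powersetCard, card_univ, Fintype.card_fin]
  · intro a _ b _ hab
    simp only [Finset.disjoint_left, mem_powersetCard]
    rintro A ⟨_, rfl⟩ ⟨_, h⟩
    exact hab h

lemma count_ge_avoid (N m : ℕ) (j : Fin N) :
    (univ.filter fun A : Finset (Fin N) => m ≤ A.card ∧ j ∉ A).card
    = ∑ k ∈ Icc m (N - 1), (N - 1).choose k := by
  classical
  have : (univ.filter fun A : Finset (Fin N) => m ≤ A.card ∧ j ∉ A)
      = (Icc m (N - 1)).biUnion (fun k => powersetCard k (univ.erase j)) := by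
    ext A
    simp only [mem_filter, mem_univ, true_and, mem_biUnion, mem_Icc, mem_powersetCard]
    constructor
    · intro ⟨h1, h2⟩
      have hsub : A ⊆ univ.erase j := fun i hi => mem_erase.mpr ⟨fun hij => h2 (hij ▸ hi), mem_univ _⟩
      refine ⟨A.card, ⟨h1, ?_⟩, hsub, rfl⟩
      have := card_le_card hsub
      rwa [card_erase_of_mem (mem_univ j), card_univ, Fintype.card_fin] at this
    · rintro ⟨k, ⟨hk, _⟩, hsub, rfl⟩
      exact ⟨hk, fun hj => (mem_erase.mp (hsub hj)).1 rfl⟩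
  rw [this, card_biUnion]
  · apply Finset.sum_congr rfl
    intro k _
    rw [card_powersetCard, card_erase_of_mem (mem_univ j), card_univ, Fintype.card_fin]
  · intro a _ b _ hab
    simp only [Finset.disjoint_left, mem_powersetCard]
    rintro A ⟨_, rfl⟩ ⟨_, h⟩
    exact hab h

/-- reflection: sum of low half equals sum of strict upper half -/
lemma sum_low_eq_sum_high (m : ℕ) :
    ∑ k ∈ range m, (2 * m).choose k = ∑ k ∈ Icc (m + 1) (2 * m), (2 * m).choose k := by
  apply Finset.sum_nbij' (i := fun k => 2 * m - k) (j := fun k => 2 * m - k)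
  · intro k hk
    simp only [mem_range] at hk
    simp only [mem_Icc]
    omega
  · intro k hk
    simp only [mem_Icc] at hk
    simp only [mem_range]
    omega
  · intro k hk
    simp only [mem_range] at hk
    omega
  · intro k hk
    simp only [mem_Icc] at hk
    omega
  · intro k hk
    simp only [mem_range] at hk
    rw [Nat.choose_symm (by omega)]

lemma sum_split (m : ℕ) :
    ∑ k ∈ range m, (2 * m).choose k + ∑ k ∈ Icc m (2 * m), (2 * m).choose k = 2 ^ (2 * m) := by
  rw [← Nat.sum_range_choose (2 * m)]
  rw [show range (2 * m + 1) = range m ∪ Icc m (2 * m) by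
    ext k; simp only [mem_union, mem_range, mem_Icc]; omega]
  rw [Finset.sum_union (by
    simp only [Finset.disjoint_left, mem_range, mem_Icc]
    intro k h1 h2; omega)]

lemma s1_eq (m : ℕ) :
    ∑ k ∈ Icc m (2 * m), (2 * m).choose k
    = ∑ k ∈ Icc (m + 1) (2 * m), (2 * m).choose k + (2 * m).choose m := by
  rw [show Icc m (2 * m) = insert m (Icc (m + 1) (2 * m)) by
    ext k; simp only [mem_insert, mem_Icc]; omega]
  rw [Finset.sum_insert (by simp only [mem_Icc]; omega)]
  omega

-- the two key arithmetic identities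
lemma two_s1 (m : ℕ) :
    2 * (∑ k ∈ Icc m (2 * m), (2 * m).choose k) = 2 ^ (2 * m) + (2 * m).choose m := by
  have h1 := sum_low_eq_sum_high m
  have h2 := sum_split m
  have h3 := s1_eq m
  omega

lemma two_s2 (m : ℕ) :
    2 * (∑ k ∈ Icc (m + 1) (2 * m), (2 * m).choose k) + (2 * m).choose m = 2 ^ (2 * m) := by
  have h1 := sum_low_eq_sum_high m
  have h2 := sum_split m
  have h3 := s1_eq m
  omega

lemma digitsum_two_mul (m : ℕ) (hm : 0 < m) :
    (Nat.digits 2 (2 * m)).sum = (Nat.digits 2 m).sum := by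
  rw [Nat.digits_def' (by norm_num) (by omega)]
  simp [Nat.mul_div_cancel_left, Nat.mul_mod_right]

lemma digitsum_two_mul_add_one (m : ℕ) :
    (Nat.digits 2 (2 * m + 1)).sum = (Nat.digits 2 m).sum + 1 := by
  rw [Nat.digits_def' (by norm_num) (by omega)]
  simp only [List.sum_cons]
  have h1 : (2 * m + 1) % 2 = 1 := by omega
  have h2 : (2 * m + 1) / 2 = m := by omega
  rw [h1, h2]; omega

lemma digitsum_pos (m : ℕ) (hm : 0 < m) : 0 < (Nat.digits 2 m).sum := by
  induction m using Nat.strong_induction_on with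
  | _ m ih =>
    rcases Nat.even_or_odd m with ⟨t, ht⟩ | ⟨t, ht⟩
    · have ht' : m = 2 * t := by omega
      subst ht'
      rw [digitsum_two_mul t (by omega)]
      exact ih t (by omega) (by omega)
    · have ht' : m = 2 * t + 1 := by omega
      subst ht'
      rw [digitsum_two_mul_add_one]
      omega

lemma central_val (m : ℕ) (hm : 0 < m) :
    padicValNat 2 ((2 * m).choose m) = (Nat.digits 2 m).sum := by
  have h := sub_one_mul_padicValNat_choose_eq_sub_sum_digits (p := 2) (k := m) (n := 2 * m)
    (by omega)
  have h2 : 2 * m - m = m := by omega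
  rw [h2, digitsum_two_mul m hm] at h
  omega

lemma zmod2_ne' : ∀ a : ZMod 2, a = 0 ↔ ¬a = 1 := by decide


lemma zeros_add_ones (N : ℕ) (x : Fin N → ZMod 2) :
    (univ.filter fun i => x i = 0).card + (univ.filter fun i => x i = 1).card = N := by
  classical
  have h := Finset.card_filter_add_card_filter_not
      (s := (univ : Finset (Fin N))) (p := fun i => x i = 0)
  have h2 : (univ.filter fun i => ¬ x i = 0) = (univ.filter fun i => x i = 1) := by
    apply Finset.filter_congr; intro i _; exact zmod2_ne (x i)
  rw [h2] at h
  simpa using h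


theorem stmt_7 (N : ℕ) (hN : 0 < N) (T : ParityTree N)
    (hT : ∀ x : Fin N → ZMod 2, T.eval x =
      decide ((Finset.univ.filter fun i => x i = 0).card ≤
              (Finset.univ.filter fun i => x i = 1).card)) :
    N + 1 - (Nat.digits 2 N).sum ≤ T.cost := by
  classical
  rcases Nat.lt_or_ge N 2 with hN1 | hN2
  · -- N = 1
    obtain rfl : N = 1 := by omega
    have hw : (Nat.digits 2 1).sum = 1 := by norm_num
    rw [hw]
    cases T with
    | node Q t0 t1 => simp [ParityTree.cost]
    | leaf b =>
      exfalso
      have h0 := hT (fun _ => 0)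
      have h1 := hT (fun _ => 1)
      have e0 : (univ.filter fun i : Fin 1 => (0 : ZMod 2) = 0) = univ := by simp
      have e1 : (univ.filter fun i : Fin 1 => (0 : ZMod 2) = 1) = ∅ := by
        apply Finset.filter_false_of_mem; intro i _; decide
      have e2 : (univ.filter fun i : Fin 1 => (1 : ZMod 2) = 0) = ∅ := by
        apply Finset.filter_false_of_mem; intro i _; decide
      have e3 : (univ.filter fun i : Fin 1 => (1 : ZMod 2) = 1) = univ := by simp
      rw [e0, e1] at h0
      rw [e2, e3] at h1
      simp [ParityTree.eval] at h0 h1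
      rw [h0] at h1
      exact Bool.false_ne_true h1
  · rcases Nat.even_or_odd N with ⟨m, hm⟩ | ⟨m, hm⟩
    · -- even case, N = 2 * m, m ≥ 1
      have hm' : N = 2 * m := by omega
      have hmpos : 0 < m := by omega
      subst hm'
      set d := T.cost with hd
      have hkey := key (2 * m) T []
      simp only [List.length_nil, Nat.sub_zero, List.not_mem_nil, false_implies,
        implies_true, and_true] at hkey
      have hpred : (univ.filter fun x : Fin (2 * m) → ZMod 2 => T.eval x = true)
          = univ.filter fun x => (m ≤ (univ.filter fun i => x i = 1).card) := by
        apply Finset.filter_congr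
        intro x _
        rw [hT x, decide_eq_true_iff]
        have := zeros_add_ones (2 * m) x
        constructor <;> intro h <;> omega
      rw [hpred, card_filter_transfer (2 * m) (fun A => m ≤ A.card), count_ge] at hkey
      -- hkey : 2 ^ (2*m - d) ∣ S1
      set a := padicValNat 2 ((2 * m).choose m) with ha
      have hav : a = (Nat.digits 2 m).sum := central_val m hmpos
      have haw : (Nat.digits 2 (2 * m)).sum = a := by rw [hav, digitsum_two_mul m hmpos]
      have ham : a ≤ m := by rw [hav]; exact Nat.digit_sum_le 2 m
      have hapos : 0 < a := by rw [hav]; exact digitsum_pos m hmpos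
      have hC : ¬ (2:ℕ) ^ (a + 1) ∣ (2 * m).choose m :=
        pow_succ_padicValNat_not_dvd (Nat.choose_pos (by omega)).ne'
      have hlt : 2 * m - d < a := by
        by_contra hge
        push_neg at hge
        have h1 : (2:ℕ) ^ a ∣ ∑ k ∈ Icc m (2 * m), (2 * m).choose k :=
          (pow_dvd_pow 2 hge).trans hkey
        have h2 : (2:ℕ) ^ (a + 1) ∣ 2 * ∑ k ∈ Icc m (2 * m), (2 * m).choose k := by
          rw [pow_succ']
          exact mul_dvd_mul_left 2 h1
        rw [two_s1 m] at h2
        have h3 : (2:ℕ) ^ (a + 1) ∣ 2 ^ (2 * m) := pow_dvd_pow 2 (by omega)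
        have h4 : (2:ℕ) ^ (a + 1) ∣ (2 * m).choose m := by
          have := Nat.dvd_sub h2 h3
          simpa using this
        exact hC h4
      rw [haw]
      omega
    · -- odd case, N = 2 * m + 1, m ≥ 1
      have hmpos : 0 < m := by omega
      subst hm
      set d := T.cost with hd
      have hj : 2 * m < 2 * m + 1 := by omega
      set j : Fin (2 * m + 1) := ⟨2 * m, hj⟩ with hjdef
      have hkey := key (2 * m + 1) T [({j}, (0 : ZMod 2))]
      simp only [List.length_cons, List.length_nil, List.mem_singleton, forall_eq,
        Finset.sum_singleton] at hkey
      have hpred : (univ.filter fun x : Fin (2 * m + 1) → ZMod 2 =>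
            T.eval x = true ∧ x j = 0)
          = univ.filter fun x =>
              (m + 1 ≤ (univ.filter fun i => x i = 1).card
                ∧ j ∉ (univ.filter fun i => x i = 1)) := by
        apply Finset.filter_congr
        intro x _
        rw [hT x, decide_eq_true_iff]
        have hzo := zeros_add_ones (2 * m + 1) x
        have hmem : j ∈ (univ.filter fun i => x i = 1) ↔ x j = 1 := by
          simp [mem_filter]
        rw [hmem, ← zmod2_ne' (x j)]
        constructor
        · rintro ⟨h1, h2⟩
          refine ⟨?_, h2⟩
          clear hkey hT h2
          omega
        · rintro ⟨h1, h2⟩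
          refine ⟨?_, h2⟩
          clear hkey hT h2
          omega
      rw [hpred,
        card_filter_transfer (2 * m + 1) (fun A => m + 1 ≤ A.card ∧ j ∉ A),
        count_ge_avoid] at hkey
      simp only [Nat.add_sub_cancel] at hkey
      -- hkey : 2 ^ (2*m+1 - d - 1) ∣ S2
      set a := padicValNat 2 ((2 * m).choose m) with ha
      have hav : a = (Nat.digits 2 m).sum := central_val m hmpos
      have haw : (Nat.digits 2 (2 * m + 1)).sum = a + 1 := by
        rw [hav, digitsum_two_mul_add_one]
      have ham : a ≤ m := by rw [hav]; exact Nat.digit_sum_le 2 m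
      have hC : ¬ (2:ℕ) ^ (a + 1) ∣ (2 * m).choose m :=
        pow_succ_padicValNat_not_dvd (Nat.choose_pos (by omega)).ne'
      have hlt : 2 * m + 1 - d - 1 < a := by
        by_contra hge
        push_neg at hge
        have h1 : (2:ℕ) ^ a ∣ ∑ k ∈ Icc (m + 1) (2 * m), (2 * m).choose k :=
          (pow_dvd_pow 2 hge).trans hkey
        have h2 : (2:ℕ) ^ (a + 1) ∣ 2 * ∑ k ∈ Icc (m + 1) (2 * m), (2 * m).choose k := by
          rw [pow_succ']
          exact mul_dvd_mul_left 2 h1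
        have h3 : (2:ℕ) ^ (a + 1) ∣ 2 ^ (2 * m) := pow_dvd_pow 2 (by omega)
        have h4 : (2:ℕ) ^ (a + 1) ∣ (2 * m).choose m := by
          have h5 := Nat.dvd_sub h3 h2
          have h6 : 2 ^ (2 * m) - 2 * ∑ k ∈ Icc (m + 1) (2 * m), (2 * m).choose k
              = (2 * m).choose m := by
            have := two_s2 m
            omega
          rwa [h6] at h5
        exact hC h4
      rw [haw]
      omega
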